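/- Let G be a finite simple cubic graph with a proper 3-edge-colouring using three colours, and let {g1, g2} be an edge cut of size 2 (determined by a set S with both S and its complement nonempty) in which both edges g1 and g2 receive the same colour x. Then for every colour y different from x, the edges g1 and g2 lie in the same connected component of the spanning subgraph of G formed by the edges coloured x or y (that is, the x-y bigon containing g1 also contains g2). -/

import Mathlib

/-- A proper edge colouring of a graph: two distinct edges sharing an endpoint
receive different colours. -/
def ProperEdgeColouring {V : Type*} {α : Type*} (G : SimpleGraph V) (c : Sym2 V → α) : Prop :=
  ∀ e₁ ∈ G.edgeSet, ∀ e₂ ∈ G.edgeSet, e₁ ≠ e₂ → (∃ v, v ∈ e₁ ∧ v ∈ e₂) → c e₁ ≠ c e₂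

/-- A cubic graph: every vertex has degree 3. -/
def IsCubic {V : Type*} (G : SimpleGraph V) : Prop :=
  ∀ v : V, (G.neighborSet v).ncard = 3

/-- The edge cut determined by a vertex set `S`: the set of edges of `G`
with exactly one endpoint in `S`. -/
def edgeCut {V : Type*} (G : SimpleGraph V) (S : Set V) : Set (Sym2 V) :=
  {e | ∃ u v, e = s(u, v) ∧ G.Adj u v ∧ u ∈ S ∧ v ∉ S}

/-- The spanning subgraph of `G` formed by the edges coloured `x` or `y`. -/
def twoColourSubgraph {V : Type*} {α : Type*} (G : SimpleGraph V) (c : Sym2 V → α)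
    (x y : α) : SimpleGraph V where
  Adj u v := G.Adj u v ∧ (c s(u, v) = x ∨ c s(u, v) = y)
  symm := by
    constructor
    intro u v h
    refine ⟨h.1.symm, ?_⟩
    rw [Sym2.eq_swap]
    exact h.2
  loopless := ⟨fun v h => G.loopless.1 v h.1⟩

/-- In a cubic graph with a proper 3-edge-colouring, if a 2-edge cut
`{g1, g2}` is monochromatic in colour `x`, then for each colour `y ≠ x` the
edges `g1` and `g2` lie in the same connected component of the spanning
subgraph formed by the edges coloured `x` or `y` (the `x`-`y` bigon containing
`g1` also contains `g2`). -/
theorem mono_two_edge_cut_same_bigon {V : Type*} [Fintype V]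
    (G : SimpleGraph V) (c : Sym2 V → Fin 3)
    (hcubic : IsCubic G) (hproper : ProperEdgeColouring G c)
    (S : Set V) (hS : S.Nonempty) (hSc : Sᶜ.Nonempty)
    (g1 g2 : Sym2 V) (hne : g1 ≠ g2) (hcut : edgeCut G S = {g1, g2})
    (x : Fin 3) (hg1 : c g1 = x) (hg2 : c g2 = x)
    (y : Fin 3) (hyx : y ≠ x) :
    g1 ∈ (twoColourSubgraph G c x y).edgeSet ∧
    g2 ∈ (twoColourSubgraph G c x y).edgeSet ∧
    ∃ u v, u ∈ g1 ∧ v ∈ g2 ∧ (twoColourSubgraph G c x y).Reachable u v := by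
  classical
  set H := twoColourSubgraph G c x y with hHdef
  -- every vertex has H-degree 2
  have hdeg : ∀ v : V, (H.neighborFinset v).card = 2 := by
    intro v
    have h3 : (G.neighborFinset v).card = 3 := by
      rw [SimpleGraph.neighborFinset_def, ← Set.ncard_eq_toFinset_card']
      exact hcubic v
    set f : V → Fin 3 := fun w => c s(v, w) with hf
    have hinj : Set.InjOn f (G.neighborFinset v : Set V) := by
      intro w1 h1 w2 h2 hfeq
      by_contra hvw
      have h1' : G.Adj v w1 := by simpa using h1
      have h2' : G.Adj v w2 := by simpa using h2
      exact hproper s(v, w1) h1' s(v, w2) h2'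
        (fun h => hvw (Sym2.congr_right.mp h)) ⟨v, Sym2.mem_mk_left _ _, Sym2.mem_mk_left _ _⟩
        hfeq
    have himg : (G.neighborFinset v).image f = Finset.univ := by
      apply Finset.eq_univ_of_card
      rw [Finset.card_image_of_injOn hinj, h3]
      simp
    have hN : H.neighborFinset v
        = (G.neighborFinset v).filter (fun w => f w = x ∨ f w = y) := by
      ext w
      simp only [SimpleGraph.mem_neighborFinset, Finset.mem_filter]
      exact ⟨fun h => ⟨h.1, h.2⟩, fun h => ⟨h.1, h.2⟩⟩
    rw [hN]
    have hfi := Finset.filter_image (f := f) (s := G.neighborFinset v)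
      (p := fun z => z = x ∨ z = y)
    have hcard : ((G.neighborFinset v).filter (fun w => f w = x ∨ f w = y)).card
        = (Finset.univ.filter (fun z : Fin 3 => z = x ∨ z = y)).card := by
      rw [← himg, hfi, Finset.card_image_of_injOn (hinj.mono (fun w hw => by
        simp only [Finset.coe_filter, Set.mem_setOf_eq] at hw
        simpa using hw.1))]
    rw [hcard]
    have hxy : (Finset.univ.filter (fun z : Fin 3 => z = x ∨ z = y)) = {x, y} := by
      ext z; simp
    rw [hxy, Finset.card_insert_of_notMem (by simpa using (Ne.symm hyx)),
      Finset.card_singleton]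
  have hg1cut : g1 ∈ edgeCut G S := by rw [hcut]; exact Set.mem_insert _ _
  have hg2cut : g2 ∈ edgeCut G S := by rw [hcut]; exact Set.mem_insert_iff.mpr (Or.inr rfl)
  obtain ⟨a, b, hg1e, hab, haS, hbS⟩ := hg1cut
  obtain ⟨p, q, hg2e, hpq, hpS, hqS⟩ := hg2cut
  have hc1 : c s(a, b) = x := by rw [← hg1e]; exact hg1
  have hc2 : c s(p, q) = x := by rw [← hg2e]; exact hg2
  have hH1 : H.Adj a b := ⟨hab, Or.inl hc1⟩
  have hH2 : H.Adj p q := ⟨hpq, Or.inl hc2⟩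
  refine ⟨by rw [hg1e]; exact H.mem_edgeSet.mpr hH1,
          by rw [hg2e]; exact H.mem_edgeSet.mpr hH2,
          a, p, by rw [hg1e]; exact Sym2.mem_mk_left a b,
          by rw [hg2e]; exact Sym2.mem_mk_left p q, ?_⟩
  by_contra hnot
  set T : Finset V := Finset.univ.filter (fun v => v ∈ S ∧ H.Reachable a v) with hT
  have haT : a ∈ T := by
    rw [hT, Finset.mem_filter]
    exact ⟨Finset.mem_univ a, haS, SimpleGraph.Reachable.refl a⟩
  have hbT : b ∉ T := by simp [hT, hbS]
  -- any H-edge leaving T is the edge from a to b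
  have key : ∀ v ∈ T, ∀ w ∈ H.neighborFinset v \ T, v = a ∧ w = b := by
    intro v hv w hw
    rw [Finset.mem_sdiff, SimpleGraph.mem_neighborFinset] at hw
    obtain ⟨hadj, hwT⟩ := hw
    rw [hT, Finset.mem_filter] at hv
    obtain ⟨-, hvS, hvR⟩ := hv
    have hwR : H.Reachable a w := hvR.trans hadj.reachable
    have hwS : w ∉ S := fun hwS => hwT (by simp [hT, hwS, hwR])
    have hmem : s(v, w) ∈ edgeCut G S := ⟨v, w, rfl, hadj.1, hvS, hwS⟩
    rw [hcut, Set.mem_insert_iff, Set.mem_singleton_iff] at hmem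
    rcases hmem with h | h
    · rw [hg1e, Sym2.eq_iff] at h
      rcases h with ⟨rfl, rfl⟩ | ⟨rfl, rfl⟩
      · exact ⟨rfl, rfl⟩
      · exact absurd hvS hbS
    · rw [hg2e, Sym2.eq_iff] at h
      rcases h with ⟨rfl, rfl⟩ | ⟨rfl, rfl⟩
      · exact absurd hvR hnot
      · exact absurd hvS hqS
  have hcross : ∀ v ∈ T, H.neighborFinset v \ T = if v = a then {b} else ∅ := by
    intro v hv
    split_ifs with hva
    · subst hva
      ext w
      simp only [Finset.mem_singleton]
      constructor
      · intro hw; exact (key v hv w hw).2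
      · rintro rfl
        rw [Finset.mem_sdiff, SimpleGraph.mem_neighborFinset]
        exact ⟨hH1, hbT⟩
    · ext w
      simp only [Finset.notMem_empty, iff_false]
      intro hw
      exact hva (key v hv w hw).1
  have hsum1 : ∑ v ∈ T, (H.neighborFinset v \ T).card = 1 := by
    have hcongr : ∑ v ∈ T, (H.neighborFinset v \ T).card
        = ∑ v ∈ T, (if v = a then 1 else 0) := by
      apply Finset.sum_congr rfl
      intro v hv
      rw [hcross v hv]
      split_ifs <;> simp
    rw [hcongr, Finset.sum_ite_eq' T a (fun _ => 1), if_pos haT]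
  -- parity: the restricted graph K on T
  have hevenIn : Even (∑ v ∈ T, (H.neighborFinset v ∩ T).card) := by
    let K : SimpleGraph V :=
      { Adj := fun u w => u ∈ T ∧ w ∈ T ∧ H.Adj u w,
        symm := ⟨fun u w h => ⟨h.2.1, h.1, h.2.2.symm⟩⟩,
        loopless := ⟨fun u h => H.loopless.1 u h.2.2⟩ }
    have hKdeg : ∀ v, K.degree v = if v ∈ T then (H.neighborFinset v ∩ T).card else 0 := by
      intro v
      rw [← SimpleGraph.card_neighborFinset_eq_degree]
      split_ifs with hv
      · congr 1
        ext w
        simp only [SimpleGraph.mem_neighborFinset, Finset.mem_inter]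
        constructor
        · intro h; exact ⟨h.2.2, h.2.1⟩
        · intro h; exact ⟨hv, h.2, h.1⟩
      · rw [Finset.card_eq_zero]
        ext w
        simp only [SimpleGraph.mem_neighborFinset, Finset.notMem_empty, iff_false]
        intro h; exact hv h.1
    have h2K : ∑ v, K.degree v = 2 * K.edgeFinset.card :=
      SimpleGraph.sum_degrees_eq_twice_card_edges K
    have hsplit : ∑ v, K.degree v = ∑ v ∈ T, (H.neighborFinset v ∩ T).card := by
      rw [Finset.sum_congr rfl (fun v _ => hKdeg v), Finset.sum_ite_mem, Finset.univ_inter]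
    rw [← hsplit, h2K]
    exact even_two_mul _
  have hevenTot : Even (∑ v ∈ T, (H.neighborFinset v ∩ T).card
      + ∑ v ∈ T, (H.neighborFinset v \ T).card) := by
    rw [← Finset.sum_add_distrib]
    have : ∀ v ∈ T, (H.neighborFinset v ∩ T).card + (H.neighborFinset v \ T).card = 2 := by
      intro v _
      rw [Finset.card_inter_add_card_sdiff, hdeg]
    rw [Finset.sum_congr rfl this, Finset.sum_const, smul_eq_mul]
    exact ⟨T.card, by ring⟩
  have hevenOut : Even (∑ v ∈ T, (H.neighborFinset v \ T).card) :=
    (Nat.even_add.mp hevenTot).mp hevenIn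
  rw [hsum1] at hevenOut
  exact (by decide : ¬ Even 1) hevenOut
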